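/- arXiv:0808.1164 — 2 statements merged into one kernel-verified Lean document; each statement's English description precedes it below -/
import Mathlib

section
/- In the hyperreal numbers, if ω is an infinite positive hyperreal, then 1 < ω^(1/ω) < 2. -/
open Filter

/-- The hyperreal extension of the real exponential function. -/
noncomputable def Hyperreal.exp : Hyperreal → Hyperreal := Germ.map Real.exp

/-- The hyperreal extension of the real logarithm. -/
noncomputable def Hyperreal.log : Hyperreal → Hyperreal := Germ.map Real.log

private lemma aux_real (x : ℝ) (hx : 16 ≤ x) :
    1 < Real.exp (Real.log x / x) ∧ Real.exp (Real.log x / x) < 2 := by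
  have hx0 : (0:ℝ) < x := by linarith
  have hx1 : (1:ℝ) < x := by linarith
  have hlog : 0 < Real.log x := Real.log_pos hx1
  constructor
  · have h : 0 < Real.log x / x := div_pos hlog hx0
    calc (1:ℝ) = Real.exp 0 := by simp
      _ < _ := Real.exp_lt_exp.2 h
  · have h8 : Real.log (x / 8) ≤ x / 8 - 1 :=
      Real.log_le_sub_one_of_pos (by positivity)
    have hld : Real.log (x / 8) = Real.log x - Real.log 8 :=
      Real.log_div (ne_of_gt hx0) (by norm_num)
    have hl8 : Real.log 8 = 3 * Real.log 2 := by
      rw [show (8:ℝ) = 2 ^ (3:ℕ) by norm_num, Real.log_pow]; push_cast; ring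
    have h2 := Real.log_two_gt_d9
    have h2' := Real.log_two_lt_d9
    have hkey : Real.log x / x < Real.log 2 := by
      rw [div_lt_iff₀ hx0]
      nlinarith
    have := Real.exp_lt_exp.2 hkey
    rwa [Real.exp_log (by norm_num)] at this
theorem grossone_pow_inv_grossone_finite (ω : Hyperreal)
    (hω : ∀ n : ℕ, (n : Hyperreal) < ω) :
    1 < Hyperreal.exp (Hyperreal.log ω / ω) ∧
      Hyperreal.exp (Hyperreal.log ω / ω) < 2 := by
  have h16 := hω 16
  induction ω using Germ.inductionOn with
  | h f =>
    have hf : ∀ᶠ i in Filter.hyperfilter ℕ, (16:ℝ) ≤ f i := by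
      have h16' : (Germ.ofFun (fun _ => (16:ℝ)) : Hyperreal) < Germ.ofFun f := h16
      exact (Germ.coe_lt.1 h16').mono fun i hi => le_of_lt hi
    constructor
    · show (Germ.ofFun (fun _ => (1:ℝ)) : Hyperreal)
          < Germ.ofFun (fun i => Real.exp (Real.log (f i) / f i))
      exact Germ.coe_lt.2 (hf.mono fun i hi => (aux_real (f i) hi).1)
    · show (Germ.ofFun (fun i => Real.exp (Real.log (f i) / f i)) : Hyperreal)
          < Germ.ofFun (fun _ => (2:ℝ))
      exact Germ.coe_lt.2 (hf.mono fun i hi => (aux_real (f i) hi).2)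
end

section
/- In the hyperreals, if ω is an infinite positive hyperreal, then ω^(1/ω) − 1 is a positive infinitesimal, i.e., 0 < ω^(1/ω) − 1 < c for every standard positive real c. -/
open Filter

theorem grossone_pow_inv_grossone_sub_one_infinitesimal (ω : Hyperreal)
    (hω : ∀ n : ℕ, (n : Hyperreal) < ω) :
    0 < Hyperreal.exp (Hyperreal.log ω / ω) - 1 ∧
      ∀ c : ℝ, 0 < c →
        Hyperreal.exp (Hyperreal.log ω / ω) - 1 < (c : Hyperreal) := by
  obtain ⟨f, rfl⟩ := Hyperreal.ofSeq_surjective ω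
  have hco : Hyperreal.exp (Hyperreal.log (Hyperreal.ofSeq f) / Hyperreal.ofSeq f)
      = Hyperreal.ofSeq (fun n => Real.exp (Real.log (f n) / f n)) := rfl
  -- eventual bound: for each N, eventually f n > N
  have hev : ∀ N : ℕ, ∀ᶠ n in hyperfilter ℕ, (N : ℝ) < f n := by
    intro N
    have h := hω N
    have h2 : Hyperreal.ofSeq (fun _ => (N:ℝ)) < Hyperreal.ofSeq f := by
      convert h using 2
      rfl
    exact Hyperreal.ofSeq_lt_ofSeq.1 h2
  constructor
  · rw [hco]
    have h0 : ((0 : Hyperreal)) = Hyperreal.ofSeq (fun _ => (0:ℝ)) := rfl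
    have h1 : Hyperreal.ofSeq (fun n => Real.exp (Real.log (f n) / f n)) - 1
        = Hyperreal.ofSeq (fun n => Real.exp (Real.log (f n) / f n) - 1) := rfl
    rw [h0, h1]
    refine Hyperreal.ofSeq_lt_ofSeq.2 ?_
    filter_upwards [hev 2] with n hn
    norm_num at hn
    have hf1 : (1:ℝ) < f n := by linarith
    have hpos : 0 < Real.log (f n) / f n := by
      apply div_pos (Real.log_pos hf1) (by linarith)
    simp only [sub_pos]
    calc (1:ℝ) = Real.exp 0 := by simp
    _ < Real.exp (Real.log (f n) / f n) := Real.exp_lt_exp.2 hpos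
  · intro c hc
    rw [hco]
    have h1 : Hyperreal.ofSeq (fun n => Real.exp (Real.log (f n) / f n)) - 1
        = Hyperreal.ofSeq (fun n => Real.exp (Real.log (f n) / f n) - 1) := rfl
    have hcc : ((c : Hyperreal)) = Hyperreal.ofSeq (fun _ => c) := rfl
    rw [h1, hcc]
    refine Hyperreal.ofSeq_lt_ofSeq.2 ?_
    -- real analysis: exp (log x / x) → 1 as x → ∞
    have htend : Tendsto (fun x : ℝ => Real.exp (Real.log x / x)) atTop (nhds 1) := by
      have h0 : Tendsto (fun x : ℝ => Real.log x / x) atTop (nhds 0) :=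
        Real.isLittleO_log_id_atTop.tendsto_div_nhds_zero
      have := (Real.continuous_exp.tendsto 0).comp h0
      simpa [Function.comp_def] using this
    have : ∀ᶠ x : ℝ in atTop, Real.exp (Real.log x / x) - 1 < c := by
      have := htend.eventually (eventually_lt_nhds (show (1:ℝ) < 1 + c by linarith))
      filter_upwards [this] with x hx
      linarith
    obtain ⟨M, hM⟩ := eventually_atTop.1 this
    obtain ⟨N, hN⟩ := exists_nat_gt M
    filter_upwards [hev N] with n hn
    exact hM _ (le_of_lt (lt_trans hN hn))
end
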